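/- For all real numbers r₁, r₂ with 2 ≤ r₁ ≤ r₂, one has (cos(π/(2r₁)))^{r₁} ≤ (cos(π/(2r₂)))^{r₂}, where powers with real exponents are taken of the positive base cos(π/(2r)) ∈ (0,1). In other words, the function f(r) = (cos(π/(2r)))^{r} is monotone nondecreasing on [2, ∞). -/

import Mathlib

open Real

lemma Faux_deriv (θ : ℝ) (h : Real.cos θ ≠ 0) :
    HasDerivAt (fun x => x * Real.tan x + Real.log (Real.cos x))
      (θ / Real.cos θ ^ 2) θ := by
  have h1 : HasDerivAt (fun x => x * Real.tan x)
      (1 * Real.tan θ + θ * (1 / Real.cos θ ^ 2)) θ :=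
    (hasDerivAt_id θ).mul (Real.hasDerivAt_tan h)
  have h2 : HasDerivAt (fun x => Real.log (Real.cos x))
      (-Real.sin θ / Real.cos θ) θ :=
    (Real.hasDerivAt_cos θ).log h
  have h3 := h1.add h2
  refine h3.congr_deriv ?_
  rw [Real.tan_eq_sin_div_cos]
  field_simp
  ring

lemma cos_pos_of_Icc {x : ℝ} (hx : x ∈ Set.Icc (0:ℝ) (π/4)) : 0 < Real.cos x := by
  apply Real.cos_pos_of_mem_Ioo
  have := Real.pi_pos
  constructor
  · linarith [hx.1]
  · linarith [hx.2]

lemma Faux_nonneg {θ : ℝ} (h0 : 0 ≤ θ) (h1 : θ ≤ π/4) :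
    0 ≤ θ * Real.tan θ + Real.log (Real.cos θ) := by
  have hπ := Real.pi_pos
  have hmono : MonotoneOn (fun x => x * Real.tan x + Real.log (Real.cos x))
      (Set.Icc 0 (π/4)) := by
    apply monotoneOn_of_deriv_nonneg (convex_Icc _ _)
    · intro x hx
      exact (Faux_deriv x (ne_of_gt (cos_pos_of_Icc hx))).differentiableAt.continuousAt.continuousWithinAt
    · intro x hx
      rw [interior_Icc] at hx
      exact ((Faux_deriv x (ne_of_gt (cos_pos_of_Icc ⟨le_of_lt hx.1, le_of_lt hx.2⟩))).differentiableAt).differentiableWithinAt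
    · intro x hx
      rw [interior_Icc] at hx
      have hc := cos_pos_of_Icc ⟨le_of_lt hx.1, le_of_lt hx.2⟩
      rw [(Faux_deriv x (ne_of_gt hc)).deriv]
      exact div_nonneg (le_of_lt hx.1) (sq_nonneg _)
  have h00 : (0:ℝ) ∈ Set.Icc (0:ℝ) (π/4) := ⟨le_refl _, by linarith⟩
  have hθθ : θ ∈ Set.Icc (0:ℝ) (π/4) := ⟨h0, h1⟩
  have := hmono h00 hθθ h0
  simpa using this

theorem stmt_3 (r₁ r₂ : ℝ) (h2 : 2 ≤ r₁) (h12 : r₁ ≤ r₂) :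
    (Real.cos (π / (2 * r₁))) ^ r₁ ≤ (Real.cos (π / (2 * r₂))) ^ r₂ := by
  have hπ := Real.pi_pos
  have hr₁ : (0:ℝ) < r₁ := by linarith
  have hr₂ : (0:ℝ) < r₂ := by linarith
  set θ₁ := π / (2 * r₁) with hθ₁def
  set θ₂ := π / (2 * r₂) with hθ₂def
  have hθ₂pos : 0 < θ₂ := by rw [hθ₂def]; positivity
  have hθ₂₁ : θ₂ ≤ θ₁ := by
    rw [hθ₂def, hθ₁def]
    apply div_le_div_of_nonneg_left (le_of_lt hπ) (by linarith) (by linarith)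
  have hθ₁le : θ₁ ≤ π / 4 := by
    rw [hθ₁def, div_le_div_iff₀ (by linarith) (by norm_num)]
    nlinarith
  have hθ₁pos : 0 < θ₁ := lt_of_lt_of_le hθ₂pos hθ₂₁
  have hmem : Set.Icc θ₂ θ₁ ⊆ Set.Icc (0:ℝ) (π/4) := by
    intro x hx
    exact ⟨le_trans (le_of_lt hθ₂pos) hx.1, le_trans hx.2 hθ₁le⟩
  have hcos : ∀ x ∈ Set.Icc θ₂ θ₁, 0 < Real.cos x := fun x hx => cos_pos_of_Icc (hmem hx)
  have hanti : AntitoneOn (fun x => Real.log (Real.cos x) / x) (Set.Icc θ₂ θ₁) := by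
    apply antitoneOn_of_deriv_nonpos (convex_Icc _ _)
    · intro x hx
      have hx0 : 0 < x := lt_of_lt_of_le hθ₂pos hx.1
      have hcx := hcos x hx
      exact (((Real.hasDerivAt_cos x).log (ne_of_gt hcx)).div (hasDerivAt_id x)
        (ne_of_gt hx0)).differentiableAt.continuousAt.continuousWithinAt
    · intro x hx
      rw [interior_Icc] at hx
      have hx0 : 0 < x := lt_of_lt_of_le hθ₂pos (le_of_lt hx.1)
      have hcx := hcos x ⟨le_of_lt hx.1, le_of_lt hx.2⟩
      exact (((Real.hasDerivAt_cos x).log (ne_of_gt hcx)).div (hasDerivAt_id x)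
        (ne_of_gt hx0)).differentiableAt.differentiableWithinAt
    · intro x hx
      rw [interior_Icc] at hx
      have hx0 : 0 < x := lt_of_lt_of_le hθ₂pos (le_of_lt hx.1)
      have hxmem : x ∈ Set.Icc (0:ℝ) (π/4) := hmem ⟨le_of_lt hx.1, le_of_lt hx.2⟩
      have hcx := cos_pos_of_Icc hxmem
      have hd := ((Real.hasDerivAt_cos x).log (ne_of_gt hcx)).div (hasDerivAt_id x)
        (ne_of_gt hx0)
      simp only [id_eq] at hd
      rw [show (fun x => Real.log (Real.cos x) / x) = ((fun y => Real.log (Real.cos y)) / id) from rfl, hd.deriv]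
      apply div_nonpos_of_nonpos_of_nonneg _ (sq_nonneg x)
      have hF := Faux_nonneg hxmem.1 hxmem.2
      rw [Real.tan_eq_sin_div_cos] at hF
      have : -Real.sin x / Real.cos x * x - Real.log (Real.cos x) * 1
          = -(x * (Real.sin x / Real.cos x) + Real.log (Real.cos x)) := by ring
      rw [this]
      linarith
  have hc₁ := hcos θ₁ ⟨hθ₂₁, le_refl _⟩
  have hc₂ := hcos θ₂ ⟨le_refl _, hθ₂₁⟩
  have key : Real.log (Real.cos θ₁) / θ₁ ≤ Real.log (Real.cos θ₂) / θ₂ :=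
    hanti ⟨le_refl _, hθ₂₁⟩ ⟨hθ₂₁, le_refl _⟩ hθ₂₁
  have hmul : Real.log (Real.cos θ₁) * r₁ ≤ Real.log (Real.cos θ₂) * r₂ := by
    have h1 : Real.log (Real.cos θ₁) * r₁ = (π/2) * (Real.log (Real.cos θ₁) / θ₁) := by
      rw [hθ₁def]; field_simp
    have h2 : Real.log (Real.cos θ₂) * r₂ = (π/2) * (Real.log (Real.cos θ₂) / θ₂) := by
      rw [hθ₂def]; field_simp
    rw [h1, h2]
    apply mul_le_mul_of_nonneg_left key (by linarith)
  rw [Real.rpow_def_of_pos hc₁, Real.rpow_def_of_pos hc₂]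
  exact Real.exp_le_exp.mpr hmul
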